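/- For every integer n, there exists a finite simple graph G whose adjacency matrix has determinant equal to n over ℤ. -/

import Mathlib

open Matrix

lemma det_adj_top (k : ℕ) :
    (SimpleGraph.adjMatrix ℤ (⊤ : SimpleGraph (Fin k))).det
      = (-1) ^ (k + 1) * ((k : ℤ) - 1) := by
  have hM : SimpleGraph.adjMatrix ℤ (⊤ : SimpleGraph (Fin k))
      = -(1 + replicateCol Unit (fun _ => (-1 : ℤ)) * replicateRow Unit (fun _ => (1 : ℤ))) := by
    ext i j
    by_cases h : i = j <;>
      simp [SimpleGraph.adjMatrix, Matrix.mul_apply, Matrix.one_apply, h, Matrix.replicateCol, Matrix.replicateRow]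
  rw [hM, det_neg, det_one_add_replicateCol_mul_replicateRow]
  simp [dotProduct, Fintype.card_fin]
  ring

def myG (a t : ℕ) : SimpleGraph (Fin (a + t)) where
  Adj i j := i ≠ j ∧ ((i : ℕ) < a ↔ (j : ℕ) < a)
  symm := ⟨fun i j ⟨h1, h2⟩ => ⟨h1.symm, h2.symm⟩⟩
  loopless := ⟨fun i ⟨h, _⟩ => h rfl⟩

instance (a t : ℕ) : DecidableRel (myG a t).Adj :=
  fun i j => inferInstanceAs (Decidable (i ≠ j ∧ ((i : ℕ) < a ↔ (j : ℕ) < a)))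

lemma adj_myG (a t : ℕ) :
    SimpleGraph.adjMatrix ℤ (myG a t)
      = (Matrix.fromBlocks
          (SimpleGraph.adjMatrix ℤ (⊤ : SimpleGraph (Fin a))) 0 0
          (SimpleGraph.adjMatrix ℤ (⊤ : SimpleGraph (Fin t)))).submatrix
          finSumFinEquiv.symm finSumFinEquiv.symm := by
  ext i j
  obtain ⟨i', rfl⟩ := finSumFinEquiv.surjective i
  obtain ⟨j', rfl⟩ := finSumFinEquiv.surjective j
  rw [Matrix.submatrix_apply, Equiv.symm_apply_apply, Equiv.symm_apply_apply]
  rcases i' with x | x <;> rcases j' with y | y <;>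
    simp [myG, SimpleGraph.adjMatrix, finSumFinEquiv_apply_left, finSumFinEquiv_apply_right,
      Fin.ext_iff, Fin.castAdd, Fin.natAdd, Fin.castLE] <;>
    first
      | omega
      | (split_ifs with h1 h2 h3 <;> first | rfl | omega)

lemma det_myG (a t : ℕ) :
    (SimpleGraph.adjMatrix ℤ (myG a t)).det
      = ((-1) ^ (a + 1) * ((a : ℤ) - 1)) * ((-1) ^ (t + 1) * ((t : ℤ) - 1)) := by
  rw [adj_myG, Matrix.det_submatrix_equiv_self, Matrix.det_fromBlocks_zero₂₁,
    det_adj_top, det_adj_top]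

/-- For every integer `n` there is a finite simple graph whose adjacency matrix has
determinant `n` over `ℤ`. -/
theorem exists_graph_with_det (n : ℤ) :
    ∃ (m : ℕ) (G : SimpleGraph (Fin m)) (inst : DecidableRel G.Adj),
      (@SimpleGraph.adjMatrix ℤ (Fin m) G inst _ _).det = n := by
  set k := n.natAbs with hk
  have hpow : ((-1 : ℤ)) ^ (k + 1 + 1) = (-1) ^ k := by
    rw [pow_succ, pow_succ]; ring
  rcases Int.natAbs_eq n with h | h <;> rcases Nat.even_or_odd k with hp | hp
  · exact ⟨k + 1 + 0, myG (k + 1) 0, inferInstance, by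
      rw [det_myG, hpow, hp.neg_one_pow]; push_cast; rw [h]; ring⟩
  · exact ⟨k + 1 + 2, myG (k + 1) 2, inferInstance, by
      rw [det_myG, hpow, hp.neg_one_pow]; push_cast; rw [h]; ring⟩
  · exact ⟨k + 1 + 2, myG (k + 1) 2, inferInstance, by
      rw [det_myG, hpow, hp.neg_one_pow]; push_cast; rw [h]; ring⟩
  · exact ⟨k + 1 + 0, myG (k + 1) 0, inferInstance, by
      rw [det_myG, hpow, hp.neg_one_pow]; push_cast; rw [h]; ring⟩
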